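/- For all θ with 0 < θ < π/2, one has (π − 2θ)·sin θ·tan θ − 2·sin θ + (π − 2θ)·sec θ ≥ ((π − 2θ) − sin 2θ)/cos²θ > 0; in particular the function L(θ) = (π − 2θ)/cos θ · ∫₀^θ cos ω / κ(ω) dω is strictly increasing on (0, π/2) whenever κ : [0, π/2] → ℝ is positive and nonincreasing. -/

import Mathlib

open Real Set intervalIntegral

lemma aux_pi_sub_pos {θ : ℝ} (hθ : θ ∈ Set.Ioo 0 (π / 2)) :
    0 < (π - 2 * θ) - Real.sin (2 * θ) := by
  have h1 : 0 < π - 2 * θ := by nlinarith [hθ.2]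
  have h2 : Real.sin (2 * θ) = Real.sin (π - 2 * θ) := (Real.sin_pi_sub _).symm
  have h3 : Real.sin (π - 2 * θ) < π - 2 * θ := Real.sin_lt h1
  linarith

lemma aux_g_pos {θ : ℝ} (hθ : θ ∈ Set.Ioo 0 (π / 2)) :
    0 < (π - 2 * θ) * (Real.cos θ ^ 2 + Real.cos θ - 1) + 2 * Real.sin θ * Real.cos θ := by
  obtain ⟨h0, h2⟩ := hθ
  have hc : 0 < Real.cos θ := Real.cos_pos_of_mem_Ioo ⟨by linarith [Real.pi_pos], h2⟩
  have hs : 0 < Real.sin θ := Real.sin_pos_of_pos_of_lt_pi h0 (by linarith [Real.pi_pos])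
  -- tan ε > ε with ε = π/2 - θ gives cos θ > (π/2 - θ) * sin θ
  set ε := π / 2 - θ with hε
  have hε0 : 0 < ε := by rw [hε]; linarith
  have hε2 : ε < π / 2 := by rw [hε]; linarith
  have htan : ε < Real.tan ε := Real.lt_tan hε0 hε2
  have hcε : 0 < Real.cos ε := Real.cos_pos_of_mem_Ioo ⟨by linarith, hε2⟩
  have htan' : ε * Real.cos ε < Real.sin ε := by
    have := Real.tan_eq_sin_div_cos ε
    rw [this] at htan
    calc ε * Real.cos ε < (Real.sin ε / Real.cos ε) * Real.cos ε := by
          exact mul_lt_mul_of_pos_right htan hcε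
      _ = Real.sin ε := by field_simp
  have hse : Real.sin ε = Real.cos θ := by rw [hε, Real.sin_pi_div_two_sub]
  have hce : Real.cos ε = Real.sin θ := by rw [hε, Real.cos_pi_div_two_sub]
  rw [hse, hce] at htan'
  -- so 2 * cos θ > (π - 2θ) * sin θ
  have hkey : (π - 2 * θ) * Real.sin θ < 2 * Real.cos θ := by
    rw [hε] at htan'; nlinarith
  have hpyth : Real.sin θ ^ 2 + Real.cos θ ^ 2 = 1 := Real.sin_sq_add_cos_sq θ
  have hπ2θ : 0 < π - 2 * θ := by nlinarith
  nlinarith [mul_pos hπ2θ hc, mul_lt_mul_of_pos_left hkey hs]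

theorem stmt_1 (κ : ℝ → ℝ)
    (hκcont : ContinuousOn κ (Set.Icc 0 (π / 2)))
    (hκpos : ∀ ω ∈ Set.Icc 0 (π / 2), 0 < κ ω)
    (hκanti : AntitoneOn κ (Set.Icc 0 (π / 2)))
    (L : ℝ → ℝ)
    (hL : ∀ θ, L θ = (π - 2 * θ) / Real.cos θ * ∫ ω in (0:ℝ)..θ, Real.cos ω / κ ω) :
    (∀ θ ∈ Set.Ioo 0 (π / 2),
      (π - 2 * θ) * Real.sin θ * Real.tan θ - 2 * Real.sin θ + (π - 2 * θ) * (1 / Real.cos θ)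
        ≥ ((π - 2 * θ) - Real.sin (2 * θ)) / Real.cos θ ^ 2
      ∧ ((π - 2 * θ) - Real.sin (2 * θ)) / Real.cos θ ^ 2 > 0)
    ∧ StrictMonoOn L (Set.Ioo 0 (π / 2)) := by
  constructor
  · intro θ hθ
    obtain ⟨h0, h2⟩ := hθ
    have hc : 0 < Real.cos θ := Real.cos_pos_of_mem_Ioo ⟨by linarith [Real.pi_pos], h2⟩
    have hc1 : Real.cos θ ≤ 1 := Real.cos_le_one θ
    have hpos := aux_pi_sub_pos ⟨h0, h2⟩
    have hg := aux_g_pos ⟨h0, h2⟩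
    constructor
    · rw [Real.tan_eq_sin_div_cos, Real.sin_two_mul, ge_iff_le, div_le_iff₀ (by positivity)]
      have hpyth : Real.sin θ ^ 2 + Real.cos θ ^ 2 = 1 := Real.sin_sq_add_cos_sq θ
      have hc' : Real.cos θ ≠ 0 := hc.ne'
      have hmul : ((π - 2 * θ) * Real.sin θ * (Real.sin θ / Real.cos θ) - 2 * Real.sin θ
            + (π - 2 * θ) * (1 / Real.cos θ)) * Real.cos θ ^ 2
          = (π - 2 * θ) * Real.sin θ ^ 2 * Real.cos θ - 2 * Real.sin θ * Real.cos θ ^ 2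
            + (π - 2 * θ) * Real.cos θ := by
        field_simp
      rw [hmul]
      have hdiff : (π - 2 * θ) * Real.sin θ ^ 2 * Real.cos θ - 2 * Real.sin θ * Real.cos θ ^ 2
            + (π - 2 * θ) * Real.cos θ - ((π - 2 * θ) - 2 * Real.sin θ * Real.cos θ)
          = (1 - Real.cos θ) * ((π - 2 * θ) * (Real.cos θ ^ 2 + Real.cos θ - 1)
              + 2 * Real.sin θ * Real.cos θ) := by
        linear_combination (π - 2 * θ) * Real.cos θ * hpyth
      nlinarith [mul_nonneg (by linarith : (0:ℝ) ≤ 1 - Real.cos θ) hg.le]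
    · rw [Real.sin_two_mul] at hpos ⊢
      positivity
  · -- strict monotonicity
    have hLeq : L = fun θ => (π - 2 * θ) / Real.cos θ * ∫ ω in (0:ℝ)..θ, Real.cos ω / κ ω :=
      funext hL
    have hfc : ContinuousOn (fun ω => Real.cos ω / κ ω) (Set.Icc 0 (π / 2)) :=
      Real.continuous_cos.continuousOn.div hκcont (fun x hx => (hκpos x hx).ne')
    have hderiv : ∀ θ ∈ Set.Ioo 0 (π / 2), HasDerivAt L
        (((-2) * Real.cos θ - (π - 2 * θ) * (-Real.sin θ)) / Real.cos θ ^ 2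
            * (∫ ω in (0:ℝ)..θ, Real.cos ω / κ ω)
          + (π - 2 * θ) / Real.cos θ * (Real.cos θ / κ θ)) θ := by
      intro θ hθ
      obtain ⟨h0, h2⟩ := hθ
      have hc : 0 < Real.cos θ := Real.cos_pos_of_mem_Ioo ⟨by linarith [Real.pi_pos], h2⟩
      have hsub : Set.uIcc (0:ℝ) θ ⊆ Set.Icc 0 (π / 2) := by
        rw [Set.uIcc_of_le h0.le]
        exact Set.Icc_subset_Icc le_rfl h2.le
      have hint : IntervalIntegrable (fun ω => Real.cos ω / κ ω) MeasureTheory.volume 0 θ :=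
        (hfc.mono hsub).intervalIntegrable
      have hmem : Set.Icc (0:ℝ) (π / 2) ∈ nhds θ :=
        Icc_mem_nhds h0 h2
      have hca : ContinuousAt (fun ω => Real.cos ω / κ ω) θ := hfc.continuousAt hmem
      have hmeas : StronglyMeasurableAtFilter (fun ω => Real.cos ω / κ ω)
          (nhds θ) MeasureTheory.volume :=
        ContinuousOn.stronglyMeasurableAtFilter isOpen_Ioo
          ((hfc.mono Set.Ioo_subset_Icc_self)) θ ⟨h0, h2⟩
      have hI : HasDerivAt (fun u => ∫ ω in (0:ℝ)..u, Real.cos ω / κ ω)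
          (Real.cos θ / κ θ) θ :=
        intervalIntegral.integral_hasDerivAt_right hint hmeas hca
      have hA : HasDerivAt (fun t => (π - 2 * t) / Real.cos t)
          (((-2) * Real.cos θ - (π - 2 * θ) * (-Real.sin θ)) / Real.cos θ ^ 2) θ := by
        have h1 : HasDerivAt (fun t : ℝ => π - 2 * t) (-2) θ := by
          simpa using ((hasDerivAt_id θ).const_mul 2).const_sub π
        exact h1.div (Real.hasDerivAt_cos θ) hc.ne'
      rw [hLeq]
      exact hA.mul hI
    apply strictMonoOn_of_deriv_pos (convex_Ioo 0 (π / 2))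
    · intro x hx
      exact (hderiv x hx).continuousAt.continuousWithinAt
    · intro θ hθ
      rw [interior_Ioo] at hθ
      obtain ⟨h0, h2⟩ := hθ
      have hc : 0 < Real.cos θ := Real.cos_pos_of_mem_Ioo ⟨by linarith [Real.pi_pos], h2⟩
      have hs : 0 < Real.sin θ := Real.sin_pos_of_pos_of_lt_pi h0 (by linarith [Real.pi_pos])
      have hk : 0 < κ θ := hκpos θ ⟨h0.le, h2.le⟩
      rw [(hderiv θ ⟨h0, h2⟩).deriv]
      set I := ∫ ω in (0:ℝ)..θ, Real.cos ω / κ ω with hIdef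
      -- bounds on I
      have hsub : Set.Icc (0:ℝ) θ ⊆ Set.Icc 0 (π / 2) := Set.Icc_subset_Icc le_rfl h2.le
      have hsub' : Set.uIcc (0:ℝ) θ ⊆ Set.Icc 0 (π / 2) := by
        rw [Set.uIcc_of_le h0.le]; exact hsub
      have hint : IntervalIntegrable (fun ω => Real.cos ω / κ ω) MeasureTheory.volume 0 θ :=
        (hfc.mono hsub').intervalIntegrable
      have hInn : 0 ≤ I := by
        rw [hIdef]
        apply intervalIntegral.integral_nonneg h0.le
        intro u hu
        have hcu : 0 ≤ Real.cos u := Real.cos_nonneg_of_mem_Icc ⟨by linarith [hu.1, Real.pi_pos],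
          by linarith [hu.2]⟩
        have hku : 0 < κ u := hκpos u (hsub hu)
        positivity
      have hIub : I ≤ Real.sin θ / κ θ := by
        have hint2 : IntervalIntegrable (fun ω => Real.cos ω / κ θ) MeasureTheory.volume 0 θ :=
          (Real.continuous_cos.div_const (κ θ)).intervalIntegrable 0 θ
        have hmono : I ≤ ∫ ω in (0:ℝ)..θ, Real.cos ω / κ θ := by
          rw [hIdef]
          apply intervalIntegral.integral_mono_on h0.le hint hint2
          intro u hu
          have hcu : 0 ≤ Real.cos u := Real.cos_nonneg_of_mem_Icc ⟨by linarith [hu.1, Real.pi_pos],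
            by linarith [hu.2]⟩
          have hku : κ θ ≤ κ u := hκanti (hsub hu) ⟨h0.le, h2.le⟩ hu.2
          exact div_le_div_of_nonneg_left hcu hk hku
        have heq : (∫ ω in (0:ℝ)..θ, Real.cos ω / κ θ) = Real.sin θ / κ θ := by
          rw [intervalIntegral.integral_div, integral_cos, Real.sin_zero, sub_zero]
        linarith [heq ▸ hmono]
      -- now positivity of the derivative
      have hterm2 : (π - 2 * θ) / Real.cos θ * (Real.cos θ / κ θ) = (π - 2 * θ) / κ θ := by
        field_simp
      rw [hterm2]
      have hπ : 0 < π - 2 * θ := by nlinarith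
      have hkeypos := aux_pi_sub_pos ⟨h0, h2⟩
      rw [Real.sin_two_mul] at hkeypos
      set N := (-2) * Real.cos θ - (π - 2 * θ) * (-Real.sin θ) with hN
      rcases le_or_gt 0 N with hNpos | hNneg
      · have : 0 ≤ N / Real.cos θ ^ 2 * I := by positivity
        have : 0 < (π - 2 * θ) / κ θ := by positivity
        linarith
      · have h1 : N / Real.cos θ ^ 2 * I ≥ N / Real.cos θ ^ 2 * (Real.sin θ / κ θ) := by
          apply mul_le_mul_of_nonpos_left hIub (by
            apply div_nonpos_of_nonpos_of_nonneg hNneg.le (by positivity))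
        have hpyth : Real.sin θ ^ 2 + Real.cos θ ^ 2 = 1 := Real.sin_sq_add_cos_sq θ
        have h2' : N / Real.cos θ ^ 2 * (Real.sin θ / κ θ) + (π - 2 * θ) / κ θ
            = ((π - 2 * θ) - 2 * Real.sin θ * Real.cos θ) / (Real.cos θ ^ 2 * κ θ) := by
          rw [hN]
          field_simp
          linear_combination (π - 2 * θ) * hpyth
        have h3 : 0 < ((π - 2 * θ) - 2 * Real.sin θ * Real.cos θ) / (Real.cos θ ^ 2 * κ θ) := by
          positivity
        linarith
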